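/- For a matroid M on n ≥ 2 elements (with M not equal to U_{0,1}), the beta invariant β(M) is zero if and only if M is disconnected (i.e., M is a direct sum of two matroids on nonempty ground sets). -/

import Mathlib

open Matroid

/-- Deletion of a set of elements from a matroid. -/
def mDelete (M : Matroid ℕ) (D : Set ℕ) : Matroid ℕ := M ↾ (M.E \ D)

/-- Contraction of a set of elements, defined by duality: `M ／ C = (M✶ ＼ C)✶`. -/
def mContract (M : Matroid ℕ) (C : Set ℕ) : Matroid ℕ := (mDelete M✶ C)✶

/-- `e` is a loop of `M`: an element of the ground set whose singleton is dependent. -/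
def IsLoopE (M : Matroid ℕ) (e : ℕ) : Prop := e ∈ M.E ∧ ¬ M.Indep {e}

/-- `e` is a coloop of `M`: an element of the ground set lying in every base. -/
def IsColoopE (M : Matroid ℕ) (e : ℕ) : Prop := e ∈ M.E ∧ ∀ B, M.IsBase B → e ∈ B

/-- `M` decomposes as the direct sum of its restrictions to `A` and `B`, where `A, B` is a
partition of the ground set into two nonempty parts: a set is independent iff its
intersections with `A` and with `B` are both independent. -/
def IsDirectSumDecomp (M : Matroid ℕ) (A B : Set ℕ) : Prop :=
  A.Nonempty ∧ B.Nonempty ∧ Disjoint A B ∧ A ∪ B = M.E ∧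
    ∀ I ⊆ M.E, (M.Indep I ↔ M.Indep (I ∩ A) ∧ M.Indep (I ∩ B))

namespace BetaAux

variable {M : Matroid ℕ} {X Y I J B A : Set ℕ} {e i : ℕ}

/-- rank of a set, as a natural number (valid when `M.E` is finite). -/
noncomputable def mrk (M : Matroid ℕ) (X : Set ℕ) : ℕ :=
  (M.exists_isBasis' X).choose.ncard

lemma Basis'_finite (hE : M.E.Finite) (hI : M.IsBasis' I X) : I.Finite :=
  hE.subset hI.indep.subset_ground

lemma mrk_eq (hE : M.E.Finite) (hI : M.IsBasis' I X) : mrk M X = I.ncard := by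
  have h2 := (M.exists_isBasis' X).choose_spec
  have := h2.encard_eq_encard hI
  rw [mrk, Set.ncard_def, this, ← Set.ncard_def]

lemma ncard_le_mrk (hE : M.E.Finite) (hJ : M.Indep J) (hJX : J ⊆ X) :
    J.ncard ≤ mrk M X := by
  obtain ⟨I, hI, hJI⟩ := hJ.subset_isBasis'_of_subset hJX
  rw [mrk_eq hE hI]
  exact Set.ncard_le_ncard hJI (Basis'_finite hE hI)

lemma mrk_mono (hE : M.E.Finite) (hXY : X ⊆ Y) : mrk M X ≤ mrk M Y := by
  obtain ⟨I, hI⟩ := M.exists_isBasis' X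
  rw [mrk_eq hE hI]
  exact ncard_le_mrk hE hI.indep (hI.subset.trans hXY)

lemma mrk_le_ncard (hE : M.E.Finite) (hX : X.Finite) : mrk M X ≤ X.ncard := by
  obtain ⟨I, hI⟩ := M.exists_isBasis' X
  rw [mrk_eq hE hI]
  exact Set.ncard_le_ncard hI.subset hX

lemma Indep.mrk_self (hE : M.E.Finite) (hI : M.Indep I) : mrk M I = I.ncard :=
  mrk_eq hE hI.isBasis_self.isBasis'

lemma indep_of_mrk_eq (hE : M.E.Finite) (hX : X ⊆ M.E) (h : mrk M X = X.ncard) :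
    M.Indep X := by
  obtain ⟨I, hI⟩ := M.exists_isBasis' X
  rw [mrk_eq hE hI] at h
  have : I = X := Set.eq_of_subset_of_ncard_le hI.subset (le_of_eq h.symm) (hE.subset hX)
  exact this ▸ hI.indep

lemma mrk_submod (hE : M.E.Finite) (X Y : Set ℕ) :
    mrk M (X ∪ Y) + mrk M (X ∩ Y) ≤ mrk M X + mrk M Y := by
  obtain ⟨I, hI⟩ := M.exists_isBasis' (X ∩ Y)
  obtain ⟨J, hJ, hIJ⟩ := hI.indep.subset_isBasis'_of_subset
    ((hI.subset.trans Set.inter_subset_left).trans Set.subset_union_left)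
  have hJfin : J.Finite := Basis'_finite hE hJ
  rw [mrk_eq hE hJ, mrk_eq hE hI]
  have h1 : (J ∩ X).ncard ≤ mrk M X := ncard_le_mrk hE (hJ.indep.inter_right X)
    Set.inter_subset_right
  have h2 : (J ∩ Y).ncard ≤ mrk M Y := ncard_le_mrk hE (hJ.indep.inter_right Y)
    Set.inter_subset_right
  have hsum : (J ∩ X).ncard + (J ∩ Y).ncard = J.ncard + (J ∩ (X ∩ Y)).ncard := by
    rw [← Set.ncard_union_add_ncard_inter (J ∩ X) (J ∩ Y) (hJfin.inter_of_left X)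
      (hJfin.inter_of_left Y), ← Set.inter_union_distrib_left,
      Set.inter_eq_self_of_subset_left hJ.subset]
    congr 2
    ext x; simp; tauto
  have hIcard : I.ncard ≤ (J ∩ (X ∩ Y)).ncard :=
    Set.ncard_le_ncard (Set.subset_inter hIJ hI.subset) (hJfin.inter_of_left _)
  omega

lemma mrk_union_le (hE : M.E.Finite) (X Y : Set ℕ) :
    mrk M (X ∪ Y) ≤ mrk M X + mrk M Y :=
  le_trans (Nat.le_add_right _ _) (mrk_submod hE X Y)

lemma mrk_empty (hE : M.E.Finite) : mrk M ∅ = 0 := by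
  have h : mrk M ∅ ≤ (∅ : Set ℕ).ncard := mrk_le_ncard hE (Set.finite_empty)
  simpa using h

/-- a basis of `Y` spans `Y`: `mrk (X ∪ I) = mrk (X ∪ Y)`. -/
lemma mrk_union_basis' (hE : M.E.Finite) (hI : M.IsBasis' I Y) (X : Set ℕ) :
    mrk M (X ∪ I) = mrk M (X ∪ Y) := by
  obtain ⟨J, hJ, hIJ⟩ := hI.indep.subset_isBasis'_of_subset
    (Set.subset_union_right (s := X))
  have hJ' : M.IsBasis' J (X ∪ Y) := by
    constructor
    · exact ⟨hJ.indep, hJ.subset.trans (Set.union_subset_union_right X hI.subset)⟩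
    · rintro K ⟨hKind, hKsub⟩ hJK
      by_contra hKJ
      obtain ⟨f, hfK, hfJ⟩ := Set.not_subset.1 hKJ
      have hfind : M.Indep (insert f J) := hKind.subset (Set.insert_subset hfK hJK)
      rcases hKsub hfK with hfX | hfY
      · exact hJ.insert_not_indep ⟨Set.mem_union_left _ hfX, hfJ⟩ hfind
      · have hfI : f ∉ I := fun hf => hfJ (hIJ hf)
        exact hI.insert_not_indep ⟨hfY, hfI⟩
          (hfind.subset (Set.insert_subset_insert hIJ))
  rw [mrk_eq hE hJ, mrk_eq hE hJ']

lemma mrk_insert_le (hE : M.E.Finite) (e : ℕ) (X : Set ℕ) :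
    mrk M (insert e X) ≤ mrk M X + 1 := by
  have h := mrk_union_le hE {e} X
  have h2 : mrk M {e} ≤ 1 := by
    simpa using mrk_le_ncard (M := M) hE (Set.finite_singleton e)
  rw [Set.singleton_union] at h
  omega

/-- if `e` is spanned by `X`, it is spanned by any superset. -/
lemma mrk_insert_eq_of_subset (hE : M.E.Finite) (h : mrk M (insert e X) = mrk M X)
    (hXY : X ⊆ Y) : mrk M (insert e Y) = mrk M Y := by
  have hsub := mrk_submod hE Y (insert e X)
  have h1 : Y ∪ insert e X = insert e Y := by
    rw [Set.union_insert, Set.union_eq_self_of_subset_right hXY]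
  have h2 : X ⊆ Y ∩ insert e X := Set.subset_inter hXY (Set.subset_insert _ _)
  have h3 := mrk_mono hE h2
  have h4 := mrk_mono hE (Set.subset_insert e Y)
  rw [h1, h] at hsub
  omega


lemma mrk_singleton_indep (hE : M.E.Finite) (h : M.Indep {e}) : mrk M {e} = 1 := by
  rw [Indep.mrk_self hE h, Set.ncard_singleton]

lemma mrk_singleton_not_indep (hE : M.E.Finite) (h : ¬ M.Indep {e}) : mrk M {e} = 0 := by
  have hb : M.IsBasis' ∅ {e} := by
    constructor
    · exact ⟨M.empty_indep, Set.empty_subset _⟩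
    · rintro K ⟨hKind, hKsub⟩ -
      rcases Set.subset_singleton_iff_eq.1 hKsub with rfl | rfl
      · exact le_refl _
      · exact absurd hKind h
  rw [mrk_eq hE hb, Set.ncard_empty]

/-- coloop rank characterization -/
lemma coloop_iff_mrk (hE : M.E.Finite) (he : e ∈ M.E) :
    IsColoopE M e ↔ mrk M (M.E \ {e}) + 1 = mrk M M.E := by
  constructor
  · rintro ⟨-, hco⟩
    obtain ⟨J, hJ⟩ := M.exists_isBasis' (M.E \ {e})
    obtain ⟨B', hB', hJB'⟩ := hJ.indep.exists_isBase_superset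
    have heB' : e ∈ B' := hco B' hB'
    have heJ : e ∉ J := fun h => (hJ.subset h).2 rfl
    have hB'eq : B' = insert e J := by
      apply Set.Subset.antisymm
      · intro f hf
        by_contra hfJ
        simp only [Set.mem_insert_iff, not_or] at hfJ
        have hfE : f ∈ M.E \ {e} := ⟨hB'.subset_ground hf, hfJ.1⟩
        exact hJ.insert_not_indep ⟨hfE, hfJ.2⟩
          (hB'.indep.subset (Set.insert_subset hf hJB'))
      · exact Set.insert_subset heB' hJB'
    have hrE : mrk M M.E = B'.ncard := by
      rw [mrk_eq hE (hB'.isBasis_ground.isBasis')]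
    rw [hrE, hB'eq, Set.ncard_insert_of_notMem heJ (Basis'_finite hE hJ), mrk_eq hE hJ]
  · intro hr
    refine ⟨he, fun B hB => ?_⟩
    by_contra heB
    have hBsub : B ⊆ M.E \ {e} := Set.subset_diff_singleton hB.subset_ground heB
    have h1 : B.ncard ≤ mrk M (M.E \ {e}) := ncard_le_mrk hE hB.indep hBsub
    have h2 : mrk M M.E = B.ncard := by rw [mrk_eq hE (hB.isBasis_ground.isBasis')]
    omega

lemma not_coloop_mrk (hE : M.E.Finite) (he : e ∈ M.E) (h : ¬ IsColoopE M e) :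
    mrk M (M.E \ {e}) = mrk M M.E := by
  have h1 := mrk_mono (M := M) hE (Set.diff_subset (s := M.E) (t := {e}))
  have h2 : mrk M (insert e (M.E \ {e})) ≤ mrk M (M.E \ {e}) + 1 := mrk_insert_le hE e _
  rw [Set.insert_diff_singleton, Set.insert_eq_of_mem he] at h2
  rw [coloop_iff_mrk hE he] at h
  omega

lemma loop_mrk_diff (hE : M.E.Finite) (h : ¬ M.Indep {e}) :
    mrk M (M.E \ {e}) = mrk M M.E := by
  obtain ⟨J, hJ⟩ := M.exists_isBasis' (M.E \ {e})
  have hJ' : M.IsBasis' J M.E := by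
    constructor
    · exact ⟨hJ.indep, hJ.subset.trans Set.diff_subset⟩
    · rintro K ⟨hKind, hKsub⟩ hJK
      by_contra hKJ
      obtain ⟨f, hfK, hfJ⟩ := Set.not_subset.1 hKJ
      have hfind : M.Indep (insert f J) := hKind.subset (Set.insert_subset hfK hJK)
      rcases eq_or_ne f e with rfl | hfe
      · exact h (hfind.subset (by simp))
      · exact hJ.insert_not_indep ⟨⟨hKsub hfK, hfe⟩, hfJ⟩ hfind
  rw [mrk_eq hE hJ, mrk_eq hE hJ']

/-- decomposition gives rank separation -/
lemma decomp_mrk (hE : M.E.Finite) (h : IsDirectSumDecomp M A B) :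
    mrk M A + mrk M B ≤ mrk M M.E := by
  obtain ⟨hA, hB, hdisj, hU, hind⟩ := h
  have hAE : A ⊆ M.E := hU ▸ Set.subset_union_left
  have hBE : B ⊆ M.E := hU ▸ Set.subset_union_right
  obtain ⟨IA, hIA⟩ := M.exists_isBasis' A
  obtain ⟨IB, hIB⟩ := M.exists_isBasis' B
  have hIAA := hIA.subset
  have hIBB := hIB.subset
  have hIdisj : Disjoint IA IB := hdisj.mono hIAA hIBB
  have hIAfin := Basis'_finite hE hIA
  have hIBfin := Basis'_finite hE hIB
  have hcap1 : (IA ∪ IB) ∩ A = IA := by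
    rw [Set.union_inter_distrib_right, Set.inter_eq_self_of_subset_left hIAA,
      ((hdisj.symm.mono_left hIBB).inter_eq), Set.union_empty]
  have hcap2 : (IA ∪ IB) ∩ B = IB := by
    rw [Set.union_inter_distrib_right, Set.inter_eq_self_of_subset_left hIBB,
      ((hdisj.mono_left hIAA).inter_eq), Set.empty_union]
  have hcard : (IA ∪ IB).ncard = IA.ncard + IB.ncard :=
    Set.ncard_union_eq hIdisj hIAfin hIBfin
  have hS : M.Indep (IA ∪ IB) := by
    rw [hind _ (Set.union_subset (hIAA.trans hAE) (hIBB.trans hBE)), hcap1, hcap2]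
    exact ⟨hIA.indep, hIB.indep⟩
  have := ncard_le_mrk hE hS (hS.subset_ground)
  rw [mrk_eq hE hIA, mrk_eq hE hIB]
  omega

/-- rank separation gives decomposition -/
lemma mk_decomp (hE : M.E.Finite) (hA : A.Nonempty) (hB : B.Nonempty)
    (hdisj : Disjoint A B) (hU : A ∪ B = M.E)
    (hr : mrk M A + mrk M B ≤ mrk M M.E) :
    IsDirectSumDecomp M A B := by
  have hAE : A ⊆ M.E := hU ▸ Set.subset_union_left
  have hBE : B ⊆ M.E := hU ▸ Set.subset_union_right
  refine ⟨hA, hB, hdisj, hU, fun I hI => ?_⟩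
  refine ⟨fun h => ⟨h.inter_right A, h.inter_right B⟩, ?_⟩
  rintro ⟨h1, h2⟩
  obtain ⟨IA, hIA, hsubA⟩ := h1.subset_isBasis'_of_subset Set.inter_subset_right
  obtain ⟨IB, hIB, hsubB⟩ := h2.subset_isBasis'_of_subset Set.inter_subset_right
  have hIAA := hIA.subset
  have hIBB := hIB.subset
  have hIdisj : Disjoint IA IB := hdisj.mono hIAA hIBB
  have hIAfin := Basis'_finite hE hIA
  have hIBfin := Basis'_finite hE hIB
  have hcard : (IA ∪ IB).ncard = IA.ncard + IB.ncard :=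
    Set.ncard_union_eq hIdisj hIAfin hIBfin
  have e1 : mrk M (IA ∪ IB) = mrk M (IA ∪ B) := mrk_union_basis' hE hIB IA
  have e2 : mrk M (B ∪ IA) = mrk M (B ∪ A) := mrk_union_basis' hE hIA B
  have hrS : mrk M (IA ∪ IB) = mrk M M.E := by
    rw [e1, Set.union_comm IA B, e2, Set.union_comm B A, hU]
  have hSle : mrk M (IA ∪ IB) ≤ (IA ∪ IB).ncard := mrk_le_ncard hE (hIAfin.union hIBfin)
  have hrA : mrk M A = IA.ncard := mrk_eq hE hIA
  have hrB : mrk M B = IB.ncard := mrk_eq hE hIB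
  have hSeq : mrk M (IA ∪ IB) = (IA ∪ IB).ncard := by omega
  have hSind : M.Indep (IA ∪ IB) :=
    indep_of_mrk_eq hE (Set.union_subset (hIAA.trans hAE) (hIBB.trans hBE)) hSeq
  refine hSind.subset ?_
  intro x hx
  rcases (hU ▸ hI) hx with hxA | hxB
  · exact Set.mem_union_left _ (hsubA ⟨hx, hxA⟩)
  · exact Set.mem_union_right _ (hsubB ⟨hx, hxB⟩)


@[simp] lemma mDelete_ground (D : Set ℕ) : (mDelete M D).E = M.E \ D := rfl

lemma mDelete_indep_iff {D : Set ℕ} : (mDelete M D).Indep I ↔ M.Indep I ∧ I ⊆ M.E \ D := by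
  simp [mDelete, Matroid.restrict_indep_iff]

@[simp] lemma mContract_ground (C : Set ℕ) : (mContract M C).E = M.E \ C := by
  simp [mContract, mDelete]

/-- base characterization of the deletion in the dual, for contract -/
lemma contract_indep_iff (hi : M.Indep {i}) :
    (mContract M {i}).Indep I ↔ I ⊆ M.E \ {i} ∧ M.Indep (insert i I) := by
  have hiE : i ∈ M.E := hi.subset_ground rfl
  have hEi : M.E \ {i} ⊆ M✶.E := by rw [Matroid.dual_ground]; exact Set.diff_subset
  have hNB : ∀ B, (mDelete M✶ {i}).IsBase B ↔
      ∃ BM, M.IsBase BM ∧ i ∈ BM ∧ B = M.E \ BM := by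
    intro B
    rw [mDelete, Matroid.dual_ground, Matroid.isBase_restrict_iff hEi]
    constructor
    · intro hB
      obtain ⟨D, hD, hBD⟩ := hB.indep.exists_isBase_superset
      have hDi : M.IsBase (M.E \ D) := hD.compl_isBase_of_dual
      have hDE : D ⊆ M.E := hD.subset_ground
      have hBeq : B = D ∩ (M.E \ {i}) :=
        hB.eq_of_subset_indep (hD.indep.inter_right _)
          (Set.subset_inter hBD hB.subset) Set.inter_subset_right
      have hiD : i ∉ D := by
        intro hiD
        have hcompl : M.E \ (M.E \ D) = D := by
          rw [Set.diff_diff_cancel_left hDE]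
        have hbasis : M✶.IsBasis (M.E \ (M.E \ D) ∩ (M.E \ {i})) (M.E \ {i}) := by
          rw [hcompl, ← hBeq]; exact hB
        have := (hDi.inter_isBasis_iff_compl_inter_isBasis_dual
          (Set.singleton_subset_iff.2 hiE)).2 hbasis
        have hempty : (M.E \ D) ∩ {i} = ∅ := by
          apply Set.eq_empty_of_subset_empty
          rintro x ⟨hx1, rfl⟩
          exact hx1.2 hiD
        rw [hempty] at this
        have hdep := this.insert_dep (show i ∈ ({i} : Set ℕ) \ ∅ by simp)
        exact hdep.not_indep (by simpa using hi)
      refine ⟨M.E \ D, hDi, ⟨hiE, hiD⟩, ?_⟩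
      rw [Set.diff_diff_cancel_left hDE, hBeq,
        Set.inter_eq_self_of_subset_left (Set.subset_diff_singleton hDE hiD)]
    · rintro ⟨BM, hBM, hiBM, rfl⟩
      have h1 : M.IsBasis (BM ∩ {i}) {i} := by
        rw [Set.inter_eq_self_of_subset_right (Set.singleton_subset_iff.2 hiBM)]
        exact hi.isBasis_self
      have h2 := hBM.compl_inter_isBasis_of_inter_isBasis h1
      rwa [Set.inter_eq_self_of_subset_left
          (Set.diff_subset_diff_right (Set.singleton_subset_iff.2 hiBM))] at h2
  rw [mContract, Matroid.dual_indep_iff_exists']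
  simp only [mDelete_ground, Matroid.dual_ground]
  constructor
  · rintro ⟨hIE, B, hB, hdisj⟩
    obtain ⟨BM, hBM, hiBM, rfl⟩ := (hNB B).1 hB
    refine ⟨hIE, hBM.indep.subset (Set.insert_subset hiBM ?_)⟩
    intro x hx
    by_contra hc
    exact (hdisj.ne_of_mem hx ⟨(hIE hx).1, hc⟩) rfl
  · rintro ⟨hIE, hind⟩
    obtain ⟨BM, hBM, hsub⟩ := hind.exists_isBase_superset
    refine ⟨hIE, M.E \ BM, (hNB _).2 ⟨BM, hBM, hsub (Set.mem_insert _ _), rfl⟩, ?_⟩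
    rw [Set.disjoint_iff_inter_eq_empty]
    apply Set.eq_empty_of_subset_empty
    rintro x ⟨hx1, hx2⟩
    exact hx2.2 (hsub (Set.mem_insert_of_mem _ hx1))

lemma mDelete_mrk (hE : M.E.Finite) {D : Set ℕ} (hX : X ⊆ M.E \ D) :
    mrk (mDelete M D) X = mrk M X := by
  obtain ⟨I, hI⟩ := M.exists_isBasis' X
  have hE' : (mDelete M D).E.Finite := hE.diff (t := D)
  have hI' : (mDelete M D).IsBasis' I X := by
    constructor
    · exact ⟨mDelete_indep_iff.2 ⟨hI.indep, hI.subset.trans hX⟩, hI.subset⟩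
    · rintro K ⟨hKind, hKsub⟩ hIK
      exact hI.2 ⟨(mDelete_indep_iff.1 hKind).1, hKsub⟩ hIK
  rw [mrk_eq hE' hI', mrk_eq hE hI]

lemma mContract_mrk (hE : M.E.Finite) (hi : M.Indep {i}) (hX : X ⊆ M.E \ {i}) :
    mrk (mContract M {i}) X + 1 = mrk M (insert i X) := by
  have hE' : (mContract M {i}).E.Finite := by rw [mContract_ground]; exact hE.diff (t := {i})
  obtain ⟨J, hJ⟩ := (mContract M {i}).exists_isBasis' X
  have hJX := hJ.subset
  have hJind := (contract_indep_iff hi).1 hJ.indep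
  have hiJ : i ∉ J := fun h => (hJind.1 h).2 rfl
  have hJ' : M.IsBasis' (insert i J) (insert i X) := by
    constructor
    · exact ⟨hJind.2, Set.insert_subset_insert hJX⟩
    · rintro K ⟨hKind, hKsub⟩ hJK
      by_contra hKJ
      obtain ⟨f, hfK, hfJ⟩ := Set.not_subset.1 hKJ
      have hfi : f ≠ i := fun h => hfJ (h ▸ Set.mem_insert _ _)
      have hfX : f ∈ X := (hKsub hfK).resolve_left hfi
      have hfJ' : f ∉ J := fun h => hfJ (Set.mem_insert_of_mem _ h)
      have hind2 : M.Indep (insert i (insert f J)) := by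
        rw [Set.insert_comm]
        exact hKind.subset (Set.insert_subset hfK
          (Set.insert_subset (hJK (Set.mem_insert _ _))
            (fun x hx => hJK (Set.mem_insert_of_mem _ hx))))
      have : (mContract M {i}).Indep (insert f J) :=
        (contract_indep_iff hi).2 ⟨Set.insert_subset (hX hfX) (hJX.trans hX), hind2⟩
      exact hJ.insert_not_indep ⟨hfX, hfJ'⟩ this
  rw [mrk_eq hE hJ', mrk_eq hE' hJ,
    Set.ncard_insert_of_notMem hiJ (hE.subset (hJX.trans (hX.trans Set.diff_subset)))]


lemma mk_decomp_insert {P Q : Set ℕ} (hE : M.E.Finite) (hiE : i ∈ M.E)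
    (hQ : Q.Nonempty) (hd : Disjoint P Q) (hiQ : i ∉ Q) (hU : P ∪ Q = M.E \ {i})
    (hr : mrk M (insert i P) + mrk M Q ≤ mrk M M.E) :
    ∃ A B, IsDirectSumDecomp M A B :=
  ⟨insert i P, Q, mk_decomp hE (Set.insert_nonempty _ _) hQ
    (Set.disjoint_left.2 (by
      rintro x hx hxQ
      rcases Set.mem_insert_iff.1 hx with rfl | hxP
      · exact hiQ hxQ
      · exact Set.disjoint_left.1 hd hxP hxQ))
    (by rw [Set.insert_union, hU, Set.insert_diff_singleton, Set.insert_eq_of_mem hiE]) hr⟩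

lemma tutte_core {X₁ X₂ Y₁ Y₂ : Set ℕ} (hE : M.E.Finite) (hiE : i ∈ M.E)
    (hXd : Disjoint X₁ X₂) (hXu : X₁ ∪ X₂ = M.E \ {i})
    (hYd : Disjoint Y₁ Y₂) (hYu : Y₁ ∪ Y₂ = M.E \ {i})
    (hrX : mrk M X₁ + mrk M X₂ ≤ mrk M M.E)
    (hrY : mrk M (insert i Y₁) + mrk M (insert i Y₂) ≤ mrk M M.E + 1)
    (hne1 : (X₁ ∩ Y₁).Nonempty) (hne2 : (X₂ ∩ Y₂).Nonempty) :
    ∃ A B, IsDirectSumDecomp M A B := by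
  have hiX1 : i ∉ X₁ := fun h => ((hXu ▸ Set.mem_union_left X₂ h).2 rfl)
  have hiX2 : i ∉ X₂ := fun h => ((hXu ▸ Set.mem_union_right X₁ h).2 rfl)
  have hiY1 : i ∉ Y₁ := fun h => ((hYu ▸ Set.mem_union_left Y₂ h).2 rfl)
  have hiY2 : i ∉ Y₂ := fun h => ((hYu ▸ Set.mem_union_right Y₁ h).2 rfl)
  have hsub1 := mrk_submod (M := M) hE X₁ (insert i Y₁)
  have hsub2 := mrk_submod (M := M) hE X₂ (insert i Y₂)
  have hu1 : X₁ ∪ insert i Y₁ = insert i (X₁ ∪ Y₁) := by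
    rw [Set.union_insert]
  have hi1 : X₁ ∩ insert i Y₁ = X₁ ∩ Y₁ := by
    rw [Set.inter_insert_of_notMem hiX1]
  have hu2 : X₂ ∪ insert i Y₂ = insert i (X₂ ∪ Y₂) := by
    rw [Set.union_insert]
  have hi2 : X₂ ∩ insert i Y₂ = X₂ ∩ Y₂ := by
    rw [Set.inter_insert_of_notMem hiX2]
  rw [hu1, hi1] at hsub1
  rw [hu2, hi2] at hsub2
  have hmem : ∀ x ∈ M.E \ {i}, (x ∈ X₁ ∨ x ∈ X₂) ∧ (x ∈ Y₁ ∨ x ∈ Y₂) := by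
    intro x hx
    rw [← hXu] at hx
    have hx' := hx
    rw [hXu, ← hYu] at hx'
    exact ⟨hx, hx'⟩
  have hQ1sub : X₂ ∩ Y₂ ⊆ M.E \ {i} := fun x hx => hXu ▸ Set.mem_union_right _ hx.1
  have hQ2sub : X₁ ∩ Y₁ ⊆ M.E \ {i} := fun x hx => hXu ▸ Set.mem_union_left _ hx.1
  rcases le_or_gt (mrk M (insert i (X₁ ∪ Y₁)) + mrk M (X₂ ∩ Y₂)) (mrk M M.E) with hle | hgt
  · refine mk_decomp_insert hE hiE hne2 ?_ (fun h => (hQ1sub h).2 rfl) ?_ hle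
    · exact Set.disjoint_union_left.2
        ⟨hXd.mono_right Set.inter_subset_left, hYd.mono_right Set.inter_subset_right⟩
    · apply Set.Subset.antisymm
      · exact Set.union_subset (Set.union_subset (hXu ▸ Set.subset_union_left)
          (hYu ▸ Set.subset_union_left)) hQ1sub
      · intro x hx
        obtain ⟨hX, hY⟩ := hmem x hx
        rcases hX with h1 | h2
        · exact Set.mem_union_left _ (Set.mem_union_left _ h1)
        · rcases hY with h3 | h4
          · exact Set.mem_union_left _ (Set.mem_union_right _ h3)
          · exact Set.mem_union_right _ ⟨h2, h4⟩
  · have hle2 : mrk M (insert i (X₂ ∪ Y₂)) + mrk M (X₁ ∩ Y₁) ≤ mrk M M.E := by omega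
    refine mk_decomp_insert hE hiE hne1 ?_ (fun h => (hQ2sub h).2 rfl) ?_ hle2
    · exact Set.disjoint_union_left.2
        ⟨(hXd.symm).mono_right Set.inter_subset_left, (hYd.symm).mono_right Set.inter_subset_right⟩
    · apply Set.Subset.antisymm
      · exact Set.union_subset (Set.union_subset (hXu ▸ Set.subset_union_right)
          (hYu ▸ Set.subset_union_right)) hQ2sub
      · intro x hx
        obtain ⟨hX, hY⟩ := hmem x hx
        rcases hX with h1 | h2
        · rcases hY with h3 | h4
          · exact Set.mem_union_right _ ⟨h1, h3⟩
          · exact Set.mem_union_left _ (Set.mem_union_right _ h4)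
        · exact Set.mem_union_left _ (Set.mem_union_left _ h2)

lemma mem_or {X₁ X₂ : Set ℕ} {i y : ℕ} (hXu : X₁ ∪ X₂ = M.E \ {i})
    (hy : y ∈ M.E \ {i}) : y ∈ X₁ ∨ y ∈ X₂ := by
  rw [← hXu] at hy; exact hy

lemma tutte (hE : M.E.Finite) (hiE : i ∈ M.E) (hil : ¬ IsLoopE M i) (hic : ¬ IsColoopE M i)
    (hdel : ∃ A B, IsDirectSumDecomp (mDelete M {i}) A B)
    (hcon : ∃ A B, IsDirectSumDecomp (mContract M {i}) A B) :
    ∃ A B, IsDirectSumDecomp M A B := by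
  have hi : M.Indep {i} := by
    by_contra h
    exact hil ⟨hiE, h⟩
  have hE' : (mDelete M {i}).E.Finite := hE.diff (t := {i})
  have hE'' : (mContract M {i}).E.Finite := by rw [mContract_ground]; exact hE.diff (t := {i})
  obtain ⟨X₁, X₂, hXdec⟩ := hdel
  obtain ⟨Y₁, Y₂, hYdec⟩ := hcon
  obtain ⟨hX1, hX2, hXd, hXu, -⟩ := id hXdec
  obtain ⟨hY1, hY2, hYd, hYu, -⟩ := id hYdec
  rw [mDelete_ground] at hXu
  rw [mContract_ground] at hYu
  have hX1s : X₁ ⊆ M.E \ {i} := hXu ▸ Set.subset_union_left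
  have hX2s : X₂ ⊆ M.E \ {i} := hXu ▸ Set.subset_union_right
  have hY1s : Y₁ ⊆ M.E \ {i} := hYu ▸ Set.subset_union_left
  have hY2s : Y₂ ⊆ M.E \ {i} := hYu ▸ Set.subset_union_right
  -- rank inequalities
  have hrX : mrk M X₁ + mrk M X₂ ≤ mrk M M.E := by
    have h := decomp_mrk hE' hXdec
    rw [mDelete_ground, mDelete_mrk hE hX1s, mDelete_mrk hE hX2s,
      mDelete_mrk hE (subset_rfl), not_coloop_mrk hE hiE hic] at h
    exact h
  have hrY : mrk M (insert i Y₁) + mrk M (insert i Y₂) ≤ mrk M M.E + 1 := by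
    have h := decomp_mrk hE'' hYdec
    rw [mContract_ground] at h
    have e1 := mContract_mrk hE hi hY1s
    have e2 := mContract_mrk hE hi hY2s
    have e3 := mContract_mrk hE hi (subset_rfl (a := M.E \ {i}))
    rw [Set.insert_diff_singleton, Set.insert_eq_of_mem hiE] at e3
    omega
  -- case analysis on crossings
  by_cases h11 : (X₁ ∩ Y₁).Nonempty
  · by_cases h22 : (X₂ ∩ Y₂).Nonempty
    · exact tutte_core hE hiE hXd hXu hYd hYu hrX hrY h11 h22
    · -- X₂ ∩ Y₂ = ∅, use cross pairing with Y₂, Y₁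
      have h12 : (X₁ ∩ Y₂).Nonempty := by
        obtain ⟨y, hy⟩ := hY2
        rcases mem_or hXu (hY2s hy) with h | h
        · exact ⟨y, h, hy⟩
        · exact absurd ⟨y, h, hy⟩ h22
      have h21 : (X₂ ∩ Y₁).Nonempty := by
        obtain ⟨x, hx⟩ := hX2
        rcases mem_or hYu (hX2s hx) with h | h
        · exact ⟨x, hx, h⟩
        · exact absurd ⟨x, hx, h⟩ h22
      exact tutte_core hE hiE hXd hXu hYd.symm (by rw [Set.union_comm]; exact hYu)
        hrX (by omega) h12 h21
  · -- X₁ ∩ Y₁ = ∅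
    have h12 : (X₁ ∩ Y₂).Nonempty := by
      obtain ⟨x, hx⟩ := hX1
      rcases mem_or hYu (hX1s hx) with h | h
      · exact absurd ⟨x, hx, h⟩ h11
      · exact ⟨x, hx, h⟩
    have h21 : (X₂ ∩ Y₁).Nonempty := by
      obtain ⟨y, hy⟩ := hY1
      rcases mem_or hXu (hY1s hy) with h | h
      · exact absurd ⟨y, h, hy⟩ h11
      · exact ⟨y, h, hy⟩
    exact tutte_core hE hiE hXd hXu hYd.symm (by rw [Set.union_comm]; exact hYu)
      hrX (by omega) h12 h21


lemma decomp_symm {A B : Set ℕ} (h : IsDirectSumDecomp M A B) : IsDirectSumDecomp M B A := by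
  obtain ⟨hA, hB, hd, hU, hind⟩ := h
  exact ⟨hB, hA, hd.symm, by rw [Set.union_comm]; exact hU,
    fun I hI => by rw [hind I hI]; exact and_comm⟩

lemma compl_singleton_nonempty (hE : M.E.Finite) (h2 : 2 ≤ M.E.ncard) (he : e ∈ M.E) :
    (M.E \ {e}).Nonempty := by
  apply Set.nonempty_of_ncard_ne_zero
  have := Set.ncard_diff_singleton_add_one he hE
  omega

lemma decomp_of_loop (hE : M.E.Finite) (h2 : 2 ≤ M.E.ncard) (he : IsLoopE M e) :
    ∃ A B, IsDirectSumDecomp M A B := by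
  obtain ⟨heE, hind⟩ := he
  refine ⟨{e}, M.E \ {e}, mk_decomp hE (Set.singleton_nonempty e)
    (compl_singleton_nonempty hE h2 heE) Set.disjoint_sdiff_right ?_ ?_⟩
  · rw [Set.singleton_union, Set.insert_diff_singleton, Set.insert_eq_of_mem heE]
  · rw [mrk_singleton_not_indep hE hind, loop_mrk_diff hE hind]
    omega

lemma decomp_of_coloop (hE : M.E.Finite) (h2 : 2 ≤ M.E.ncard) (he : IsColoopE M e) :
    ∃ A B, IsDirectSumDecomp M A B := by
  have heE := he.1
  have hind : M.Indep {e} := by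
    obtain ⟨B, hB⟩ := M.exists_isBase
    exact hB.indep.subset (Set.singleton_subset_iff.2 (he.2 B hB))
  have hrk := (coloop_iff_mrk hE heE).1 he
  refine ⟨{e}, M.E \ {e}, mk_decomp hE (Set.singleton_nonempty e)
    (compl_singleton_nonempty hE h2 heE) Set.disjoint_sdiff_right ?_ ?_⟩
  · rw [Set.singleton_union, Set.insert_diff_singleton, Set.insert_eq_of_mem heE]
  · rw [mrk_singleton_indep hE hind]
    omega

lemma singleton_decomp {A B : Set ℕ} (hE : M.E.Finite) (h : IsDirectSumDecomp M A B)
    (hA : A = {e}) : IsLoopE M e ∨ IsColoopE M e := by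
  subst hA
  obtain ⟨-, hB, hd, hU, -⟩ := id h
  have heE : e ∈ M.E := hU ▸ Set.mem_union_left _ rfl
  have hBeq : B = M.E \ {e} := by
    apply Set.Subset.antisymm
    · exact Set.subset_diff.2 ⟨hU ▸ Set.subset_union_right, hd.symm⟩
    · intro x hx
      rcases (hU ▸ (hx.1 : x ∈ M.E) : x ∈ {e} ∪ B) with h1 | h1
      · exact absurd h1 hx.2
      · exact h1
  have hr := decomp_mrk hE h
  rw [hBeq] at hr
  by_cases hind : M.Indep {e}
  · right
    rw [coloop_iff_mrk hE heE]
    rw [mrk_singleton_indep hE hind] at hr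
    have h1 := mrk_mono (M := M) hE (Set.diff_subset (s := M.E) (t := {e}))
    have h2 := mrk_insert_le (M := M) hE e (M.E \ {e})
    rw [Set.insert_diff_singleton, Set.insert_eq_of_mem heE] at h2
    omega
  · exact Or.inl ⟨heE, hind⟩

lemma decomp_mDelete {A B : Set ℕ} (hE : M.E.Finite) (hdec : IsDirectSumDecomp M A B)
    (hiA : i ∈ A) (hA2 : (A \ {i}).Nonempty) (hic : ¬ IsColoopE M i) :
    IsDirectSumDecomp (mDelete M {i}) (A \ {i}) B := by
  obtain ⟨hA, hB, hd, hU, -⟩ := id hdec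
  have hiE : i ∈ M.E := hU ▸ Set.mem_union_left _ hiA
  have hiB : i ∉ B := fun h => (Set.disjoint_left.1 hd hiA) h
  have hBsub : B ⊆ M.E \ {i} := Set.subset_diff.2
    ⟨hU ▸ Set.subset_union_right, Set.disjoint_singleton_right.2 hiB⟩
  have hUnew : (A \ {i}) ∪ B = M.E \ {i} := by
    rw [← hU]
    ext x
    simp only [Set.mem_union, Set.mem_diff, Set.mem_singleton_iff]
    constructor
    · rintro (⟨h1, h2⟩ | h1)
      · exact ⟨Or.inl h1, h2⟩
      · exact ⟨Or.inr h1, fun hx => hiB (hx ▸ h1)⟩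
    · rintro ⟨h1 | h1, h2⟩
      · exact Or.inl ⟨h1, h2⟩
      · exact Or.inr h1
  have hfinD : (mDelete M {i}).E.Finite := by rw [mDelete_ground]; exact hE.diff
  apply mk_decomp hfinD hA2 hB (hd.mono_left Set.diff_subset)
    (by rw [mDelete_ground]; exact hUnew)
  rw [mDelete_ground, mDelete_mrk hE (hUnew ▸ Set.subset_union_left),
    mDelete_mrk hE hBsub, mDelete_mrk hE subset_rfl, not_coloop_mrk hE hiE hic]
  have h1 := mrk_mono (M := M) hE (Set.diff_subset (s := A) (t := {i}))
  have h2 := decomp_mrk hE hdec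
  omega

lemma decomp_mContract {A B : Set ℕ} (hE : M.E.Finite) (hdec : IsDirectSumDecomp M A B)
    (hiA : i ∈ A) (hA2 : (A \ {i}).Nonempty) (hil : ¬ IsLoopE M i) :
    IsDirectSumDecomp (mContract M {i}) (A \ {i}) B := by
  obtain ⟨hA, hB, hd, hU, -⟩ := id hdec
  have hiE : i ∈ M.E := hU ▸ Set.mem_union_left _ hiA
  have hi : M.Indep {i} := by
    by_contra h; exact hil ⟨hiE, h⟩
  have hiB : i ∉ B := fun h => (Set.disjoint_left.1 hd hiA) h
  have hBsub : B ⊆ M.E \ {i} := Set.subset_diff.2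
    ⟨hU ▸ Set.subset_union_right, Set.disjoint_singleton_right.2 hiB⟩
  have hUnew : (A \ {i}) ∪ B = M.E \ {i} := by
    rw [← hU]
    ext x
    simp only [Set.mem_union, Set.mem_diff, Set.mem_singleton_iff]
    constructor
    · rintro (⟨h1, h2⟩ | h1)
      · exact ⟨Or.inl h1, h2⟩
      · exact ⟨Or.inr h1, fun hx => hiB (hx ▸ h1)⟩
    · rintro ⟨h1 | h1, h2⟩
      · exact Or.inl ⟨h1, h2⟩
      · exact Or.inr h1
  have hfinC : (mContract M {i}).E.Finite := by rw [mContract_ground]; exact hE.diff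
  apply mk_decomp hfinC hA2 hB (hd.mono_left Set.diff_subset)
    (by rw [mContract_ground]; exact hUnew)
  rw [mContract_ground]
  have e1 := mContract_mrk hE hi (hUnew ▸ Set.subset_union_left (s := A \ {i}) (t := B))
  have e2 := mContract_mrk hE hi hBsub
  have e3 := mContract_mrk hE hi (subset_rfl (a := M.E \ {i}))
  rw [Set.insert_diff_singleton, Set.insert_eq_of_mem hiA] at e1
  rw [Set.insert_diff_singleton, Set.insert_eq_of_mem hiE] at e3
  have h2 := decomp_mrk hE hdec
  have h3 := mrk_insert_le (M := M) hE i B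
  omega


theorem main (β : Matroid ℕ → ℤ)
    (hβ0 : ∀ e : ℕ, β (Matroid.loopyOn {e}) = 0)
    (hβ1 : ∀ e : ℕ, β (Matroid.freeOn {e}) = 1)
    (hβlc : ∀ M : Matroid ℕ, 2 ≤ M.E.encard → (∃ e, IsLoopE M e ∨ IsColoopE M e) → β M = 0)
    (hβdc : ∀ (M : Matroid ℕ) (i : ℕ), i ∈ M.E → ¬ IsLoopE M i → ¬ IsColoopE M i →
      β M = β (mContract M {i}) + β (mDelete M {i})) :
    ∀ n : ℕ, ∀ M : Matroid ℕ, M.E.Finite → M.E.ncard = n →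
    (1 ≤ n → 0 ≤ β M) ∧
    (2 ≤ n → ((∃ A B, IsDirectSumDecomp M A B) → β M = 0) ∧
      ((¬ ∃ A B, IsDirectSumDecomp M A B) → 1 ≤ β M)) := by
  intro n
  induction n using Nat.strong_induction_on with
  | _ n IH =>
  intro M hE hcard
  -- the n = 1 classification, used in part 1
  have hone : M.E.ncard = 1 → (0 ≤ β M) := by
    intro h1
    obtain ⟨a, ha⟩ := Set.ncard_eq_one.1 h1
    by_cases hind : M.Indep M.E
    · have hfr : M = Matroid.freeOn {a} := Matroid.eq_freeOn_iff.2 ⟨ha, ha ▸ hind⟩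
      rw [hfr, hβ1 a]
      exact zero_le_one
    · have hlp : M = Matroid.loopyOn {a} := by
        rw [Matroid.eq_loopyOn_iff]
        refine ⟨ha, fun X hX hXind => ?_⟩
        by_contra hXne
        have hXeq : X = M.E := by
          rw [ha] at hX ⊢
          rcases Set.subset_singleton_iff_eq.1 hX with rfl | rfl
          · exact absurd rfl hXne
          · rfl
        exact hind (hXeq ▸ hXind)
      rw [hlp, hβ0 a]
  by_cases hn2 : 2 ≤ n
  case neg =>
    refine ⟨fun h1 => hone (by omega), fun h2 => absurd h2 hn2⟩
  case pos =>
  -- common setup for n ≥ 2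
  have h2card : 2 ≤ M.E.ncard := hcard ▸ hn2
  have h2e : 2 ≤ M.E.encard := by
    rw [← hE.cast_ncard_eq]
    exact_mod_cast h2card
  by_cases hlc : ∃ e, IsLoopE M e ∨ IsColoopE M e
  · have hβM : β M = 0 := hβlc M h2e hlc
    refine ⟨fun _ => le_of_eq hβM.symm, fun _ => ⟨fun _ => hβM, fun hnd => ?_⟩⟩
    exfalso
    obtain ⟨e, he⟩ := hlc
    rcases he with he | he
    · exact hnd (decomp_of_loop hE h2card he)
    · exact hnd (decomp_of_coloop hE h2card he)
  · push_neg at hlc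
    obtain ⟨i, hiE⟩ : M.E.Nonempty := Set.nonempty_of_ncard_ne_zero (by omega)
    have hil := (hlc i).1
    have hic := (hlc i).2
    have hrec := hβdc M i hiE hil hic
    have hDg : (mDelete M {i}).E = M.E \ {i} := mDelete_ground {i}
    have hCg : (mContract M {i}).E = M.E \ {i} := mContract_ground {i}
    have hcardD : (M.E \ {i}).ncard = n - 1 := by
      have := Set.ncard_diff_singleton_add_one hiE hE
      omega
    have IHd := IH (n-1) (by omega) (mDelete M {i})
      (by rw [hDg]; exact hE.diff) (by rw [hDg, hcardD])
    have IHc := IH (n-1) (by omega) (mContract M {i})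
      (by rw [hCg]; exact hE.diff) (by rw [hCg, hcardD])
    have hd0 : 0 ≤ β (mDelete M {i}) := IHd.1 (by omega)
    have hc0 : 0 ≤ β (mContract M {i}) := IHc.1 (by omega)
    refine ⟨fun _ => by omega, fun _ => ⟨?_, ?_⟩⟩
    · -- disconnected implies zero
      rintro ⟨A, B, hdec0⟩
      -- rule out n = 2
      have hn3 : 3 ≤ n := by
        by_contra hn
        obtain ⟨hA, hB, hd, hU, -⟩ := id hdec0
        have hAfin : A.Finite := hE.subset (hU ▸ Set.subset_union_left)
        have hBfin : B.Finite := hE.subset (hU ▸ Set.subset_union_right)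
        have hcardsum : A.ncard + B.ncard = n := by
          rw [← Set.ncard_union_eq hd hAfin hBfin, hU, hcard]
        have hA1 : 0 < A.ncard := (Set.ncard_pos hAfin).2 hA
        have hB1 : 0 < B.ncard := (Set.ncard_pos hBfin).2 hB
        have : A.ncard = 1 := by omega
        obtain ⟨a, ha⟩ := Set.ncard_eq_one.1 this
        rcases singleton_decomp hE hdec0 ha with hl | hl
        · exact (hlc a).1 hl
        · exact (hlc a).2 hl
      have key : ∀ A B : Set ℕ, IsDirectSumDecomp M A B → i ∈ A → β M = 0 := by
        intro A B hdec hiA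
        have hA2 : (A \ {i}).Nonempty := by
          by_contra hne
          rw [Set.not_nonempty_iff_eq_empty, Set.diff_eq_empty] at hne
          have hAeq : A = {i} := Set.Subset.antisymm hne
            (Set.singleton_subset_iff.2 hiA)
          rcases singleton_decomp hE hdec hAeq with hl | hl
          · exact (hlc i).1 hl
          · exact (hlc i).2 hl
        have hd1 := decomp_mDelete hE hdec hiA hA2 hic
        have hd2 := decomp_mContract hE hdec hiA hA2 hil
        have hz1 : β (mDelete M {i}) = 0 := (IHd.2 (by omega)).1 ⟨_, _, hd1⟩
        have hz2 : β (mContract M {i}) = 0 := (IHc.2 (by omega)).1 ⟨_, _, hd2⟩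
        omega
      have hiAB : i ∈ A ∪ B := (id hdec0).2.2.2.1.symm ▸ hiE
      rcases hiAB with hiA | hiB
      · exact key A B hdec0 hiA
      · exact key B A (decomp_symm hdec0) hiB
    · -- connected implies at least one
      intro hnd
      rcases Nat.lt_or_ge n 3 with hn2' | hn3
      · -- n = 2
        have hD1 : (M.E \ {i}).ncard = 1 := by omega
        obtain ⟨f, hf⟩ := Set.ncard_eq_one.1 hD1
        have hfmem : f ∈ M.E \ {i} := hf ▸ rfl
        have hfind : M.Indep {f} := by
          by_contra h
          exact (hlc f).1 ⟨hfmem.1, h⟩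
        have hdel_eq : mDelete M {i} = Matroid.freeOn {f} := by
          rw [mDelete, hf]
          exact Matroid.restrict_eq_freeOn_iff.2 hfind
        have hb1 : β (mDelete M {i}) = 1 := by
          rw [hdel_eq]
          exact hβ1 f
        omega
      · by_cases hdd : ∃ A B, IsDirectSumDecomp (mDelete M {i}) A B
        · by_cases hcc : ∃ A B, IsDirectSumDecomp (mContract M {i}) A B
          · exact absurd (tutte hE hiE hil hic hdd hcc) hnd
          · have h1 : 1 ≤ β (mContract M {i}) := (IHc.2 (by omega)).2 hcc
            omega
        · have h1 : 1 ≤ β (mDelete M {i}) := (IHd.2 (by omega)).2 hdd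
          omega


end BetaAux

/-- For a (finite) matroid `M` on at least two elements, the beta invariant `β(M)` is zero
if and only if `M` is disconnected, i.e. a direct sum of two matroids on nonempty ground
sets.  (The hypothesis of at least two elements excludes `U_{0,1}`, and `U_{1,1}`.) -/
theorem beta_eq_zero_iff_disconnected (β : Matroid ℕ → ℤ)
    (hβ0 : ∀ e : ℕ, β (Matroid.loopyOn {e}) = 0)
    (hβ1 : ∀ e : ℕ, β (Matroid.freeOn {e}) = 1)
    (hβlc : ∀ M : Matroid ℕ, 2 ≤ M.E.encard → (∃ e, IsLoopE M e ∨ IsColoopE M e) → β M = 0)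
    (hβdc : ∀ (M : Matroid ℕ) (i : ℕ), i ∈ M.E → ¬ IsLoopE M i → ¬ IsColoopE M i →
      β M = β (mContract M {i}) + β (mDelete M {i}))
    (M : Matroid ℕ) (hfin : M.E.Finite) (h2 : 2 ≤ M.E.encard) :
    β M = 0 ↔ ∃ A B, IsDirectSumDecomp M A B := by
  have h2n : 2 ≤ M.E.ncard := by
    rw [← hfin.cast_ncard_eq] at h2
    exact_mod_cast h2
  obtain ⟨-, h2'⟩ := BetaAux.main β hβ0 hβ1 hβlc hβdc M.E.ncard M hfin rfl
  obtain ⟨hz, ho⟩ := h2' h2n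
  constructor
  · intro hb
    by_contra hnd
    have := ho hnd
    omega
  · exact hz
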